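/- Let p = 2m+n ≥ 3. If H is a planar (m,n)-colored mixed graph and v₁,...,v_t are pairwise non-adjacent vertices all adjacent to a common vertex v with the same adjacency type α, and every pair v_i, v_j is joined in H by a special 2-path avoiding v, then t ≤ 2p. -/

import Mathlib

/-- An `(m,n)`-colored mixed graph: a simple underlying graph together with a
labeling `lab` of ordered adjacent pairs.  Arcs get labels with absolute value in
`{1,...,m}` (reversal negates the label) and edges get labels in
`{m+1,...,m+n}` (reversal preserves the label).  Non-adjacent pairs get `0`. -/
structure CMG (V : Type) (m n : ℕ) where
  G : SimpleGraph V
  lab : V → V → ℤ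
  lab_eq_zero : ∀ ⦃u v : V⦄, ¬ G.Adj u v → lab u v = 0
  lab_mem : ∀ ⦃u v : V⦄, G.Adj u v →
    (1 ≤ lab u v ∧ lab u v ≤ (m : ℤ) + n) ∨ (-(m : ℤ) ≤ lab u v ∧ lab u v ≤ -1)
  lab_rev_arc : ∀ ⦃u v : V⦄, G.Adj u v → lab u v ≤ (m : ℤ) → lab v u = - lab u v
  lab_rev_edge : ∀ ⦃u v : V⦄, G.Adj u v → (m : ℤ) < lab u v → lab v u = lab u v

/-- `u` sees `v`: they are adjacent or joined by a special 2-path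
(a 2-path `u-w-v` with `lab u w ≠ lab v w`). -/
def CMG.sees {V : Type} {m n : ℕ} (H : CMG V m n) (u v : V) : Prop :=
  H.G.Adj u v ∨ ∃ w : V, H.G.Adj u w ∧ H.G.Adj v w ∧ H.lab u w ≠ H.lab v w

/-- `G` has an `H`-minor: disjoint nonempty connected branch sets indexed by the
vertices of `H`, with an edge of `G` between branch sets of adjacent vertices of `H`. -/
def HasMinor {V W : Type} (G : SimpleGraph V) (H : SimpleGraph W) : Prop :=
  ∃ B : W → Set V, (∀ i, (B i).Nonempty) ∧ Pairwise (Function.onFun Disjoint B) ∧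
    (∀ i, (G.induce (B i)).Connected) ∧
    ∀ ⦃i j : W⦄, H.Adj i j → ∃ u ∈ B i, ∃ v ∈ B j, G.Adj u v

/-- Planarity via Wagner's theorem: no `K₅` minor and no `K_{3,3}` minor. -/
def IsPlanar {V : Type} (G : SimpleGraph V) : Prop :=
  ¬ HasMinor G (SimpleGraph.completeGraph (Fin 5)) ∧
  ¬ HasMinor G (completeBipartiteGraph (Fin 3) (Fin 3))

lemma exists_adj_symm {V : Type} {G : SimpleGraph V} {s t : Set V}
    (h : ∃ u ∈ s, ∃ x ∈ t, G.Adj u x) : ∃ u ∈ t, ∃ x ∈ s, G.Adj u x := by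
  obtain ⟨u,hu,x,hx,hux⟩ := h
  exact ⟨x,hx,u,hu,hux.symm⟩

lemma hasMinor_K33' {V : Type} (G : SimpleGraph V) (A0 A1 A2 B0 B1 B2 : Set V)
    (nA0 : A0.Nonempty) (nA1 : A1.Nonempty) (nA2 : A2.Nonempty)
    (nB0 : B0.Nonempty) (nB1 : B1.Nonempty) (nB2 : B2.Nonempty)
    (dA01 : Disjoint A0 A1) (dA02 : Disjoint A0 A2) (dA12 : Disjoint A1 A2)
    (dB01 : Disjoint B0 B1) (dB02 : Disjoint B0 B2) (dB12 : Disjoint B1 B2)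
    (d00 : Disjoint A0 B0) (d01 : Disjoint A0 B1) (d02 : Disjoint A0 B2)
    (d10 : Disjoint A1 B0) (d11 : Disjoint A1 B1) (d12 : Disjoint A1 B2)
    (d20 : Disjoint A2 B0) (d21 : Disjoint A2 B1) (d22 : Disjoint A2 B2)
    (cA0 : (G.induce A0).Connected) (cA1 : (G.induce A1).Connected)
    (cA2 : (G.induce A2).Connected) (cB0 : (G.induce B0).Connected)
    (cB1 : (G.induce B1).Connected) (cB2 : (G.induce B2).Connected)
    (e00 : ∃ u ∈ A0, ∃ x ∈ B0, G.Adj u x) (e01 : ∃ u ∈ A0, ∃ x ∈ B1, G.Adj u x)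
    (e02 : ∃ u ∈ A0, ∃ x ∈ B2, G.Adj u x) (e10 : ∃ u ∈ A1, ∃ x ∈ B0, G.Adj u x)
    (e11 : ∃ u ∈ A1, ∃ x ∈ B1, G.Adj u x) (e12 : ∃ u ∈ A1, ∃ x ∈ B2, G.Adj u x)
    (e20 : ∃ u ∈ A2, ∃ x ∈ B0, G.Adj u x) (e21 : ∃ u ∈ A2, ∃ x ∈ B1, G.Adj u x)
    (e22 : ∃ u ∈ A2, ∃ x ∈ B2, G.Adj u x) :
    HasMinor G (completeBipartiteGraph (Fin 3) (Fin 3)) := by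
  refine ⟨Sum.elim ![A0, A1, A2] ![B0, B1, B2], ?_, ?_, ?_, ?_⟩
  · rintro (i|i) <;> fin_cases i
    exacts [nA0, nA1, nA2, nB0, nB1, nB2]
  · rintro (i|i) (j|j) hij
    · fin_cases i <;> fin_cases j <;>
        first
          | exact absurd rfl hij
          | exact dA01 | exact dA01.symm | exact dA02 | exact dA02.symm
          | exact dA12 | exact dA12.symm
    · fin_cases i <;> fin_cases j
      exacts [d00, d01, d02, d10, d11, d12, d20, d21, d22]
    · fin_cases i <;> fin_cases j
      exacts [d00.symm, d10.symm, d20.symm, d01.symm, d11.symm, d21.symm,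
        d02.symm, d12.symm, d22.symm]
    · fin_cases i <;> fin_cases j <;>
        first
          | exact absurd rfl hij
          | exact dB01 | exact dB01.symm | exact dB02 | exact dB02.symm
          | exact dB12 | exact dB12.symm
  · rintro (i|i) <;> fin_cases i
    exacts [cA0, cA1, cA2, cB0, cB1, cB2]
  · rintro (i|i) (j|j) hij
    · simp at hij
    · fin_cases i <;> fin_cases j
      exacts [e00, e01, e02, e10, e11, e12, e20, e21, e22]
    · fin_cases i <;> fin_cases j
      exacts [exists_adj_symm e00, exists_adj_symm e10, exists_adj_symm e20,
        exists_adj_symm e01, exists_adj_symm e11, exists_adj_symm e21,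
        exists_adj_symm e02, exists_adj_symm e12, exists_adj_symm e22]
    · simp at hij

lemma hasMinor_K5' {V : Type} (G : SimpleGraph V) (B0 B1 B2 B3 B4 : Set V)
    (n0 : B0.Nonempty) (n1 : B1.Nonempty) (n2 : B2.Nonempty)
    (n3 : B3.Nonempty) (n4 : B4.Nonempty)
    (d01 : Disjoint B0 B1) (d02 : Disjoint B0 B2) (d03 : Disjoint B0 B3)
    (d04 : Disjoint B0 B4) (d12 : Disjoint B1 B2) (d13 : Disjoint B1 B3)
    (d14 : Disjoint B1 B4) (d23 : Disjoint B2 B3) (d24 : Disjoint B2 B4)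
    (d34 : Disjoint B3 B4)
    (c0 : (G.induce B0).Connected) (c1 : (G.induce B1).Connected)
    (c2 : (G.induce B2).Connected) (c3 : (G.induce B3).Connected)
    (c4 : (G.induce B4).Connected)
    (e01 : ∃ u ∈ B0, ∃ x ∈ B1, G.Adj u x) (e02 : ∃ u ∈ B0, ∃ x ∈ B2, G.Adj u x)
    (e03 : ∃ u ∈ B0, ∃ x ∈ B3, G.Adj u x) (e04 : ∃ u ∈ B0, ∃ x ∈ B4, G.Adj u x)
    (e12 : ∃ u ∈ B1, ∃ x ∈ B2, G.Adj u x) (e13 : ∃ u ∈ B1, ∃ x ∈ B3, G.Adj u x)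
    (e14 : ∃ u ∈ B1, ∃ x ∈ B4, G.Adj u x) (e23 : ∃ u ∈ B2, ∃ x ∈ B3, G.Adj u x)
    (e24 : ∃ u ∈ B2, ∃ x ∈ B4, G.Adj u x) (e34 : ∃ u ∈ B3, ∃ x ∈ B4, G.Adj u x) :
    HasMinor G (SimpleGraph.completeGraph (Fin 5)) := by
  refine ⟨![B0, B1, B2, B3, B4], ?_, ?_, ?_, ?_⟩
  · intro i; fin_cases i
    exacts [n0, n1, n2, n3, n4]
  · intro i j hij
    fin_cases i <;> fin_cases j <;>
      first
        | exact absurd rfl hij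
        | exact d01 | exact d01.symm | exact d02 | exact d02.symm
        | exact d03 | exact d03.symm | exact d04 | exact d04.symm
        | exact d12 | exact d12.symm | exact d13 | exact d13.symm
        | exact d14 | exact d14.symm | exact d23 | exact d23.symm
        | exact d24 | exact d24.symm | exact d34 | exact d34.symm
  · intro i; fin_cases i
    exacts [c0, c1, c2, c3, c4]
  · intro i j hij
    have hij' : i ≠ j := hij
    fin_cases i <;> fin_cases j <;>
      first
        | exact absurd rfl hij'
        | exact e01 | exact exists_adj_symm e01
        | exact e02 | exact exists_adj_symm e02
        | exact e03 | exact exists_adj_symm e03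
        | exact e04 | exact exists_adj_symm e04
        | exact e12 | exact exists_adj_symm e12
        | exact e13 | exact exists_adj_symm e13
        | exact e14 | exact exists_adj_symm e14
        | exact e23 | exact exists_adj_symm e23
        | exact e24 | exact exists_adj_symm e24
        | exact e34 | exact exists_adj_symm e34


lemma set_disjoint_insert_left {V : Type} {a : V} {s t : Set V} :
    Disjoint (insert a s) t ↔ a ∉ t ∧ Disjoint s t := by
  constructor
  · intro h
    exact ⟨fun ha => (Set.disjoint_left.mp h (Set.mem_insert a s)) ha,
      h.mono_left (Set.subset_insert a s)⟩
  · rintro ⟨ha, h⟩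
    rw [Set.disjoint_left]
    intro x hx hxt
    rcases Set.mem_insert_iff.mp hx with rfl | hx'
    · exact ha hxt
    · exact Set.disjoint_left.mp h hx' hxt

lemma exists_three {β : Type*} [DecidableEq β] {s : Finset β} (h : 2 < s.card) :
    ∃ p ∈ s, ∃ q ∈ s, ∃ r ∈ s, p ≠ q ∧ p ≠ r ∧ q ≠ r := by
  obtain ⟨p, hp⟩ := Finset.card_pos.mp (show 0 < s.card by omega)
  have h1 : 0 < (s.erase p).card := by rw [Finset.card_erase_of_mem hp]; omega
  obtain ⟨q, hq⟩ := Finset.card_pos.mp h1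
  have h2 : 0 < ((s.erase p).erase q).card := by
    rw [Finset.card_erase_of_mem hq, Finset.card_erase_of_mem hp]; omega
  obtain ⟨r, hr⟩ := Finset.card_pos.mp h2
  have hq1 := Finset.mem_erase.mp hq
  have hr1 := Finset.mem_erase.mp hr
  have hr2 := Finset.mem_erase.mp hr1.2
  exact ⟨p, hp, q, hq1.2, r, hr2.2, fun hh => hq1.1 hh.symm, fun hh => hr2.1 hh.symm,
    fun hh => hr1.1 hh.symm⟩

lemma connected_induce_star {V : Type} (G : SimpleGraph V) (S : Set V) (c : V) (hc : c ∈ S)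
    (h : ∀ x ∈ S, x = c ∨ G.Adj c x) : (G.induce S).Connected := by
  rw [SimpleGraph.connected_iff]
  refine ⟨?_, ⟨⟨c, hc⟩⟩⟩
  have key : ∀ x : S, (G.induce S).Reachable x ⟨c, hc⟩ := by
    rintro ⟨x, hx⟩
    rcases h x hx with rfl | ha
    · exact SimpleGraph.Reachable.refl _
    · exact SimpleGraph.Adj.reachable (by simpa using ha.symm)
  intro x y
  exact (key x).trans (key y).symm

lemma connected_induce_pt {V : Type} (G : SimpleGraph V) (c : V) :
    (G.induce {c}).Connected :=
  connected_induce_star G {c} c rfl (fun _ hx => Or.inl hx)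

theorem independent_agreeing_good_vertices_bound {V : Type} (m n : ℕ)
    (hp : 3 ≤ 2 * m + n) (H : CMG V m n) (hpl : IsPlanar H.G) (v : V) (α : ℤ)
    (t : ℕ) (vs : Fin t → V) (hinj : Function.Injective vs)
    (hindep : ∀ i j, i ≠ j → ¬ H.G.Adj (vs i) (vs j))
    (hnbr : ∀ i, H.G.Adj v (vs i) ∧ H.lab v (vs i) = α)
    (hsee : ∀ i j, i ≠ j → ∃ x : V, x ≠ v ∧ H.G.Adj (vs i) x ∧ H.G.Adj (vs j) x ∧
      H.lab (vs i) x ≠ H.lab (vs j) x) :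
    t ≤ 2 * (2 * m + n) := by
  by_contra hle'
  push_neg at hle'
  have hle : 2 * (2 * m + n) < t := hle'
  have ht7 : 7 ≤ t := by omega
  have adjv : ∀ i, H.G.Adj v (vs i) := fun i => (hnbr i).1
  have vs_ne_v : ∀ i, vs i ≠ v := fun i => (adjv i).ne'
  choose X hXv hXi hXj hXlab using hsee
  have mid_ne_vs : ∀ (i j : Fin t) (h : i ≠ j) (k : Fin t), X i j h ≠ vs k := by
    intro i j h k heq
    have h1 : H.G.Adj (vs i) (vs k) := heq ▸ hXi i j h
    by_cases hk : k = i
    · subst hk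
      exact H.G.irrefl h1
    · exact hindep i k (fun hh => hk hh.symm) h1
  by_cases hP : ∃ w, w ≠ v ∧ ∃ i j k : Fin t, i ≠ j ∧ i ≠ k ∧ j ≠ k ∧
      H.G.Adj (vs i) w ∧ H.G.Adj (vs j) w ∧ H.G.Adj (vs k) w
  · obtain ⟨w, hwv, i0, j0, k0, hij0, hik0, hjk0, hA1, hA2, hA3⟩ := hP
    have w_ne_vs : ∀ a, w ≠ vs a := by
      intro a heq
      by_cases h : a = i0
      · subst h
        exact hindep j0 a hij0.symm (heq ▸ hA2)
      · exact hindep i0 a (fun hh => h hh.symm) (heq ▸ hA1)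
    -- Step B : w is adjacent to every vs a
    have adj_w : ∀ a, H.G.Adj (vs a) w := by
      by_contra hna
      push_neg at hna
      obtain ⟨a, ha⟩ := hna
      have hai : a ≠ i0 := fun h => ha (h ▸ hA1)
      have haj : a ≠ j0 := fun h => ha (h ▸ hA2)
      have hak : a ≠ k0 := fun h => ha (h ▸ hA3)
      refine hpl.2 ?_
      refine hasMinor_K33' H.G {vs i0} {vs j0} {vs k0} {v} {w}
        (insert (vs a) {X i0 a hai.symm, X j0 a haj.symm, X k0 a hak.symm})
        ?_ ?_ ?_ ?_ ?_ ?_ ?_ ?_ ?_ ?_ ?_ ?_ ?_ ?_ ?_ ?_ ?_ ?_ ?_ ?_ ?_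
        ?_ ?_ ?_ ?_ ?_ ?_ ?_ ?_ ?_ ?_ ?_ ?_ ?_ ?_ ?_
      -- nonempty
      · exact Set.singleton_nonempty _
      · exact Set.singleton_nonempty _
      · exact Set.singleton_nonempty _
      · exact Set.singleton_nonempty _
      · exact Set.singleton_nonempty _
      · exact Set.insert_nonempty _ _
      -- A-A disjoint
      · exact Set.disjoint_singleton.mpr (hinj.ne hij0)
      · exact Set.disjoint_singleton.mpr (hinj.ne hik0)
      · exact Set.disjoint_singleton.mpr (hinj.ne hjk0)
      -- B-B disjoint
      · exact Set.disjoint_singleton.mpr (Ne.symm hwv)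
      · simp only [Set.disjoint_singleton_left, Set.mem_insert_iff,
          Set.mem_singleton_iff, not_or]
        exact ⟨(vs_ne_v a).symm, (hXv i0 a hai.symm).symm, (hXv j0 a haj.symm).symm,
          (hXv k0 a hak.symm).symm⟩
      · simp only [Set.disjoint_singleton_left, Set.mem_insert_iff,
          Set.mem_singleton_iff, not_or]
        refine ⟨w_ne_vs a, ?_, ?_, ?_⟩
        · intro h; exact ha (h ▸ hXj i0 a hai.symm)
        · intro h; exact ha (h ▸ hXj j0 a haj.symm)
        · intro h; exact ha (h ▸ hXj k0 a hak.symm)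
      -- A-B disjoint
      · exact Set.disjoint_singleton.mpr (vs_ne_v i0)
      · exact Set.disjoint_singleton.mpr hA1.ne
      · simp only [Set.disjoint_singleton_left, Set.mem_insert_iff,
          Set.mem_singleton_iff, not_or]
        exact ⟨hinj.ne hai.symm, fun h => mid_ne_vs i0 a hai.symm i0 h.symm,
          fun h => mid_ne_vs j0 a haj.symm i0 h.symm,
          fun h => mid_ne_vs k0 a hak.symm i0 h.symm⟩
      · exact Set.disjoint_singleton.mpr (vs_ne_v j0)
      · exact Set.disjoint_singleton.mpr hA2.ne
      · simp only [Set.disjoint_singleton_left, Set.mem_insert_iff,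
          Set.mem_singleton_iff, not_or]
        exact ⟨hinj.ne haj.symm, fun h => mid_ne_vs i0 a hai.symm j0 h.symm,
          fun h => mid_ne_vs j0 a haj.symm j0 h.symm,
          fun h => mid_ne_vs k0 a hak.symm j0 h.symm⟩
      · exact Set.disjoint_singleton.mpr (vs_ne_v k0)
      · exact Set.disjoint_singleton.mpr hA3.ne
      · simp only [Set.disjoint_singleton_left, Set.mem_insert_iff,
          Set.mem_singleton_iff, not_or]
        exact ⟨hinj.ne hak.symm, fun h => mid_ne_vs i0 a hai.symm k0 h.symm,
          fun h => mid_ne_vs j0 a haj.symm k0 h.symm,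
          fun h => mid_ne_vs k0 a hak.symm k0 h.symm⟩
      -- connectivity
      · exact connected_induce_pt _ _
      · exact connected_induce_pt _ _
      · exact connected_induce_pt _ _
      · exact connected_induce_pt _ _
      · exact connected_induce_pt _ _
      · refine connected_induce_star _ _ (vs a) (Set.mem_insert _ _) ?_
        intro x hx
        simp only [Set.mem_insert_iff, Set.mem_singleton_iff] at hx
        rcases hx with rfl | rfl | rfl | rfl
        · exact Or.inl rfl
        · exact Or.inr (hXj i0 a hai.symm)
        · exact Or.inr (hXj j0 a haj.symm)
        · exact Or.inr (hXj k0 a hak.symm)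
      -- edges
      · exact ⟨vs i0, rfl, v, rfl, (adjv i0).symm⟩
      · exact ⟨vs i0, rfl, w, rfl, hA1⟩
      · exact ⟨vs i0, rfl, X i0 a hai.symm, by simp, hXi i0 a hai.symm⟩
      · exact ⟨vs j0, rfl, v, rfl, (adjv j0).symm⟩
      · exact ⟨vs j0, rfl, w, rfl, hA2⟩
      · exact ⟨vs j0, rfl, X j0 a haj.symm, by simp, hXi j0 a haj.symm⟩
      · exact ⟨vs k0, rfl, v, rfl, (adjv k0).symm⟩
      · exact ⟨vs k0, rfl, w, rfl, hA3⟩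
      · exact ⟨vs k0, rfl, X k0 a hak.symm, by simp, hXi k0 a hak.symm⟩
    -- pigeonhole on labels at w
    classical
    have hmaps : ∀ a : Fin t, H.lab (vs a) w ∈ (Finset.Icc (-(m:ℤ)) ((m:ℤ)+n)).erase 0 := by
      intro a
      rcases H.lab_mem (adj_w a) with ⟨h1, h2⟩ | ⟨h1, h2⟩ <;>
        simp only [Finset.mem_erase, Finset.mem_Icc] <;>
        constructor <;> [omega; omega; omega; omega]
    have hcard : ((Finset.Icc (-(m:ℤ)) ((m:ℤ)+n)).erase 0).card = 2*m+n := by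
      rw [Finset.card_erase_of_mem (by simp only [Finset.mem_Icc]; omega), Int.card_Icc]
      omega
    obtain ⟨y, hy, hycard⟩ := Finset.exists_lt_card_fiber_of_mul_lt_card_of_maps_to
      (s := (Finset.univ : Finset (Fin t))) (n := 2) (fun a _ => hmaps a)
      (by rw [hcard, Finset.card_univ, Fintype.card_fin]; omega)
    obtain ⟨p, hpF, q, hqF, r, hrF, hpq, hpr, hqr⟩ := exists_three hycard
    have labp : H.lab (vs p) w = y := (Finset.mem_filter.mp hpF).2
    have labq : H.lab (vs q) w = y := (Finset.mem_filter.mp hqF).2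
    have labr : H.lab (vs r) w = y := (Finset.mem_filter.mp hrF).2
    have mid_ne_w : ∀ (i j : Fin t) (h : i ≠ j), H.lab (vs i) w = y →
        H.lab (vs j) w = y → X i j h ≠ w := by
      intro i j h hi hj heq
      exact hXlab i j h (by rw [heq, hi, hj])
    -- if some common neighbor u ∉ {v, w} of all three exists : K33
    have common : ∀ u, u ≠ v → u ≠ w → H.G.Adj (vs p) u → H.G.Adj (vs q) u →
        H.G.Adj (vs r) u → False := by
      intro u huv huw h1 h2 h3
      have hu_ne : ∀ a, u ≠ vs a := by
        intro a heq
        have h1' : H.G.Adj (vs p) (vs a) := heq ▸ h1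
        by_cases hap : a = p
        · subst hap; exact H.G.irrefl h1'
        · exact hindep p a (fun hh => hap hh.symm) h1'
      refine hpl.2 (hasMinor_K33' H.G {vs p} {vs q} {vs r} {v} {w} {u}
        (Set.singleton_nonempty _) (Set.singleton_nonempty _) (Set.singleton_nonempty _)
        (Set.singleton_nonempty _) (Set.singleton_nonempty _) (Set.singleton_nonempty _)
        (Set.disjoint_singleton.mpr (hinj.ne hpq))
        (Set.disjoint_singleton.mpr (hinj.ne hpr))
        (Set.disjoint_singleton.mpr (hinj.ne hqr))
        (Set.disjoint_singleton.mpr hwv.symm)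
        (Set.disjoint_singleton.mpr huv.symm.symm.symm)
        (Set.disjoint_singleton.mpr huw.symm.symm.symm)
        (Set.disjoint_singleton.mpr (vs_ne_v p))
        (Set.disjoint_singleton.mpr (adj_w p).ne)
        (Set.disjoint_singleton.mpr (hu_ne p).symm)
        (Set.disjoint_singleton.mpr (vs_ne_v q))
        (Set.disjoint_singleton.mpr (adj_w q).ne)
        (Set.disjoint_singleton.mpr (hu_ne q).symm)
        (Set.disjoint_singleton.mpr (vs_ne_v r))
        (Set.disjoint_singleton.mpr (adj_w r).ne)
        (Set.disjoint_singleton.mpr (hu_ne r).symm)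
        (connected_induce_pt _ _) (connected_induce_pt _ _) (connected_induce_pt _ _)
        (connected_induce_pt _ _) (connected_induce_pt _ _) (connected_induce_pt _ _)
        ⟨vs p, rfl, v, rfl, (adjv p).symm⟩ ⟨vs p, rfl, w, rfl, adj_w p⟩
        ⟨vs p, rfl, u, rfl, h1⟩
        ⟨vs q, rfl, v, rfl, (adjv q).symm⟩ ⟨vs q, rfl, w, rfl, adj_w q⟩
        ⟨vs q, rfl, u, rfl, h2⟩
        ⟨vs r, rfl, v, rfl, (adjv r).symm⟩ ⟨vs r, rfl, w, rfl, adj_w r⟩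
        ⟨vs r, rfl, u, rfl, h3⟩)
    by_cases e1 : X p q hpq = X p r hpr
    · exact common (X p q hpq) (hXv p q hpq) (mid_ne_w p q hpq labp labq)
        (hXi p q hpq) (hXj p q hpq) (by rw [e1]; exact hXj p r hpr)
    by_cases e2 : X p q hpq = X q r hqr
    · exact common (X p q hpq) (hXv p q hpq) (mid_ne_w p q hpq labp labq)
        (hXi p q hpq) (hXj p q hpq) (by rw [e2]; exact hXj q r hqr)
    by_cases e3 : X p r hpr = X q r hqr
    · exact common (X p r hpr) (hXv p r hpr) (mid_ne_w p r hpr labp labr)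
        (hXi p r hpr) (by rw [e3]; exact hXi q r hqr) (hXj p r hpr)
    -- all three midpoints distinct : K5 minor
    obtain ⟨l, hlp, hlq, hlr⟩ : ∃ l : Fin t, l ≠ p ∧ l ≠ q ∧ l ≠ r := by
      by_contra hc
      push_neg at hc
      have hsub : (Finset.univ : Finset (Fin t)) ⊆ {p, q, r} := by
        intro l _
        simp only [Finset.mem_insert, Finset.mem_singleton]
        by_cases h1 : l = p
        · exact Or.inl h1
        · by_cases h2 : l = q
          · exact Or.inr (Or.inl h2)
          · exact Or.inr (Or.inr (hc l h1 h2))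
      have hcard3 : ({p, q, r} : Finset (Fin t)).card ≤ 3 := by
        refine le_trans (Finset.card_insert_le _ _) ?_
        have h5 := Finset.card_insert_le q ({r} : Finset (Fin t))
        simp only [Finset.card_singleton] at h5
        omega
      have h6 := Finset.card_le_card hsub
      rw [Finset.card_univ, Fintype.card_fin] at h6
      omega
    refine hpl.1 (hasMinor_K5' H.G (insert v {vs l}) {w} {vs p}
      (insert (vs q) {X p q hpq}) (insert (vs r) {X p r hpr, X q r hqr})
      (Set.insert_nonempty _ _) (Set.singleton_nonempty _) (Set.singleton_nonempty _)
      (Set.insert_nonempty _ _) (Set.insert_nonempty _ _)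
      ?_ ?_ ?_ ?_ ?_ ?_ ?_ ?_ ?_ ?_ ?_ ?_ ?_ ?_ ?_ ?_ ?_ ?_ ?_ ?_ ?_ ?_ ?_ ?_ ?_)
    -- disjointness
    · simp only [set_disjoint_insert_left, Set.disjoint_singleton_left,
        Set.mem_singleton_iff]
      exact ⟨hwv.symm, (adj_w l).ne⟩
    · simp only [set_disjoint_insert_left, Set.disjoint_singleton_left,
        Set.mem_singleton_iff]
      exact ⟨(vs_ne_v p).symm, hinj.ne hlp⟩
    · simp only [set_disjoint_insert_left, Set.disjoint_singleton_left,
        Set.mem_insert_iff, Set.mem_singleton_iff, not_or]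
      exact ⟨⟨(vs_ne_v q).symm, (hXv p q hpq).symm⟩,
        ⟨hinj.ne hlq, (mid_ne_vs p q hpq l).symm⟩⟩
    · simp only [set_disjoint_insert_left, Set.disjoint_singleton_left,
        Set.mem_insert_iff, Set.mem_singleton_iff, not_or]
      exact ⟨⟨(vs_ne_v r).symm, (hXv p r hpr).symm, (hXv q r hqr).symm⟩,
        ⟨hinj.ne hlr, (mid_ne_vs p r hpr l).symm, (mid_ne_vs q r hqr l).symm⟩⟩
    · exact Set.disjoint_singleton.mpr (w_ne_vs p)
    · simp only [Set.disjoint_singleton_left, Set.mem_insert_iff,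
        Set.mem_singleton_iff, not_or]
      exact ⟨w_ne_vs q, (mid_ne_w p q hpq labp labq).symm⟩
    · simp only [Set.disjoint_singleton_left, Set.mem_insert_iff,
        Set.mem_singleton_iff, not_or]
      exact ⟨w_ne_vs r, (mid_ne_w p r hpr labp labr).symm,
        (mid_ne_w q r hqr labq labr).symm⟩
    · simp only [Set.disjoint_singleton_left, Set.mem_insert_iff,
        Set.mem_singleton_iff, not_or]
      exact ⟨hinj.ne hpq, (mid_ne_vs p q hpq p).symm⟩
    · simp only [Set.disjoint_singleton_left, Set.mem_insert_iff,
        Set.mem_singleton_iff, not_or]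
      exact ⟨hinj.ne hpr, (mid_ne_vs p r hpr p).symm, (mid_ne_vs q r hqr p).symm⟩
    · simp only [set_disjoint_insert_left, Set.disjoint_singleton_left,
        Set.mem_insert_iff, Set.mem_singleton_iff, not_or]
      exact ⟨⟨hinj.ne hqr, (mid_ne_vs p r hpr q).symm, (mid_ne_vs q r hqr q).symm⟩,
        ⟨mid_ne_vs p q hpq r, e1, e2⟩⟩
    -- connectivity
    · refine connected_induce_star _ _ v (Set.mem_insert _ _) ?_
      intro x hx
      simp only [Set.mem_insert_iff, Set.mem_singleton_iff] at hx
      rcases hx with rfl | rfl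
      · exact Or.inl rfl
      · exact Or.inr (adjv l)
    · exact connected_induce_pt _ _
    · exact connected_induce_pt _ _
    · refine connected_induce_star _ _ (vs q) (Set.mem_insert _ _) ?_
      intro x hx
      simp only [Set.mem_insert_iff, Set.mem_singleton_iff] at hx
      rcases hx with rfl | rfl
      · exact Or.inl rfl
      · exact Or.inr (hXj p q hpq)
    · refine connected_induce_star _ _ (vs r) (Set.mem_insert _ _) ?_
      intro x hx
      simp only [Set.mem_insert_iff, Set.mem_singleton_iff] at hx
      rcases hx with rfl | rfl | rfl
      · exact Or.inl rfl
      · exact Or.inr (hXj p r hpr)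
      · exact Or.inr (hXj q r hqr)
    -- edges
    · exact ⟨vs l, by simp, w, rfl, adj_w l⟩
    · exact ⟨v, Set.mem_insert _ _, vs p, rfl, adjv p⟩
    · exact ⟨v, Set.mem_insert _ _, vs q, Set.mem_insert _ _, adjv q⟩
    · exact ⟨v, Set.mem_insert _ _, vs r, Set.mem_insert _ _, adjv r⟩
    · exact ⟨w, rfl, vs p, rfl, (adj_w p).symm⟩
    · exact ⟨w, rfl, vs q, Set.mem_insert _ _, (adj_w q).symm⟩
    · exact ⟨w, rfl, vs r, Set.mem_insert _ _, (adj_w r).symm⟩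
    · exact ⟨vs p, rfl, X p q hpq, by simp, hXi p q hpq⟩
    · exact ⟨vs p, rfl, X p r hpr, by simp, hXi p r hpr⟩
    · exact ⟨vs q, Set.mem_insert _ _, X q r hqr, by simp, hXi q r hqr⟩

  · push_neg at hP
    obtain ⟨b, hb⟩ : ∃ b : Fin 5 → Fin t, Function.Injective b := by
      refine ⟨fun i => ⟨i.val, by omega⟩, fun i j hij => ?_⟩
      have h2 := congrArg (fun z : Fin t => z.val) hij
      exact Fin.ext h2
    have n01 : b 0 ≠ b 1 := hb.ne (by decide)
    have n02 : b 0 ≠ b 2 := hb.ne (by decide)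
    have n12 : b 1 ≠ b 2 := hb.ne (by decide)
    have n03 : b 0 ≠ b 3 := hb.ne (by decide)
    have n13 : b 1 ≠ b 3 := hb.ne (by decide)
    have n23 : b 2 ≠ b 3 := hb.ne (by decide)
    have n04 : b 0 ≠ b 4 := hb.ne (by decide)
    have n14 : b 1 ≠ b 4 := hb.ne (by decide)
    have n24 : b 2 ≠ b 4 := hb.ne (by decide)
    have n34 : b 3 ≠ b 4 := hb.ne (by decide)
    have key : ∀ (p q c d : Fin t) (hpc : p ≠ c) (hqd : q ≠ d), p ≠ d → c ≠ d →
        X p c hpc ≠ X q d hqd := by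
      intro p q c d hpc hqd hpd hcd heq
      have h3 : H.G.Adj (vs d) (X p c hpc) := by rw [heq]; exact hXj q d hqd
      exact hP (X p c hpc) (hXv p c hpc) p c d hpc hpd hcd
        (hXi p c hpc) (hXj p c hpc) h3
    refine hpl.2 (hasMinor_K33' H.G {vs (b 0)} {vs (b 1)} {vs (b 2)} {v}
      (insert (vs (b 3)) {X (b 0) (b 3) n03, X (b 1) (b 3) n13, X (b 2) (b 3) n23})
      (insert (vs (b 4)) {X (b 0) (b 4) n04, X (b 1) (b 4) n14, X (b 2) (b 4) n24})
      (Set.singleton_nonempty _) (Set.singleton_nonempty _) (Set.singleton_nonempty _)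
      (Set.singleton_nonempty _) (Set.insert_nonempty _ _) (Set.insert_nonempty _ _)
      (Set.disjoint_singleton.mpr (hinj.ne n01))
      (Set.disjoint_singleton.mpr (hinj.ne n02))
      (Set.disjoint_singleton.mpr (hinj.ne n12))
      ?_ ?_ ?_ ?_ ?_ ?_ ?_ ?_ ?_ ?_ ?_ ?_
      (connected_induce_pt _ _) (connected_induce_pt _ _) (connected_induce_pt _ _)
      (connected_induce_pt _ _) ?_ ?_
      ⟨vs (b 0), rfl, v, rfl, (adjv _).symm⟩
      ⟨vs (b 0), rfl, X (b 0) (b 3) n03, by simp, hXi _ _ _⟩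
      ⟨vs (b 0), rfl, X (b 0) (b 4) n04, by simp, hXi _ _ _⟩
      ⟨vs (b 1), rfl, v, rfl, (adjv _).symm⟩
      ⟨vs (b 1), rfl, X (b 1) (b 3) n13, by simp, hXi _ _ _⟩
      ⟨vs (b 1), rfl, X (b 1) (b 4) n14, by simp, hXi _ _ _⟩
      ⟨vs (b 2), rfl, v, rfl, (adjv _).symm⟩
      ⟨vs (b 2), rfl, X (b 2) (b 3) n23, by simp, hXi _ _ _⟩
      ⟨vs (b 2), rfl, X (b 2) (b 4) n24, by simp, hXi _ _ _⟩)
    -- B-B disjointness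
    · simp only [Set.disjoint_singleton_left, Set.mem_insert_iff,
        Set.mem_singleton_iff, not_or]
      exact ⟨(vs_ne_v _).symm, (hXv _ _ _).symm, (hXv _ _ _).symm, (hXv _ _ _).symm⟩
    · simp only [Set.disjoint_singleton_left, Set.mem_insert_iff,
        Set.mem_singleton_iff, not_or]
      exact ⟨(vs_ne_v _).symm, (hXv _ _ _).symm, (hXv _ _ _).symm, (hXv _ _ _).symm⟩
    · simp only [set_disjoint_insert_left, Set.disjoint_singleton_left,
        Set.mem_insert_iff, Set.mem_singleton_iff, not_or]
      refine ⟨⟨hinj.ne n34, (mid_ne_vs _ _ _ _).symm, (mid_ne_vs _ _ _ _).symm,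
        (mid_ne_vs _ _ _ _).symm⟩, ?_, ?_, ?_⟩
      · exact ⟨mid_ne_vs _ _ _ _, key _ _ _ _ _ _ n04 n34, key _ _ _ _ _ _ n04 n34,
          key _ _ _ _ _ _ n04 n34⟩
      · exact ⟨mid_ne_vs _ _ _ _, key _ _ _ _ _ _ n14 n34, key _ _ _ _ _ _ n14 n34,
          key _ _ _ _ _ _ n14 n34⟩
      · exact ⟨mid_ne_vs _ _ _ _, key _ _ _ _ _ _ n24 n34, key _ _ _ _ _ _ n24 n34,
          key _ _ _ _ _ _ n24 n34⟩
    -- A-B disjointness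
    · exact Set.disjoint_singleton.mpr (vs_ne_v _)
    · simp only [Set.disjoint_singleton_left, Set.mem_insert_iff,
        Set.mem_singleton_iff, not_or]
      exact ⟨hinj.ne n03, (mid_ne_vs _ _ _ _).symm, (mid_ne_vs _ _ _ _).symm,
        (mid_ne_vs _ _ _ _).symm⟩
    · simp only [Set.disjoint_singleton_left, Set.mem_insert_iff,
        Set.mem_singleton_iff, not_or]
      exact ⟨hinj.ne n04, (mid_ne_vs _ _ _ _).symm, (mid_ne_vs _ _ _ _).symm,
        (mid_ne_vs _ _ _ _).symm⟩
    · exact Set.disjoint_singleton.mpr (vs_ne_v _)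
    · simp only [Set.disjoint_singleton_left, Set.mem_insert_iff,
        Set.mem_singleton_iff, not_or]
      exact ⟨hinj.ne n13, (mid_ne_vs _ _ _ _).symm, (mid_ne_vs _ _ _ _).symm,
        (mid_ne_vs _ _ _ _).symm⟩
    · simp only [Set.disjoint_singleton_left, Set.mem_insert_iff,
        Set.mem_singleton_iff, not_or]
      exact ⟨hinj.ne n14, (mid_ne_vs _ _ _ _).symm, (mid_ne_vs _ _ _ _).symm,
        (mid_ne_vs _ _ _ _).symm⟩
    · exact Set.disjoint_singleton.mpr (vs_ne_v _)
    · simp only [Set.disjoint_singleton_left, Set.mem_insert_iff,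
        Set.mem_singleton_iff, not_or]
      exact ⟨hinj.ne n23, (mid_ne_vs _ _ _ _).symm, (mid_ne_vs _ _ _ _).symm,
        (mid_ne_vs _ _ _ _).symm⟩
    · simp only [Set.disjoint_singleton_left, Set.mem_insert_iff,
        Set.mem_singleton_iff, not_or]
      exact ⟨hinj.ne n24, (mid_ne_vs _ _ _ _).symm, (mid_ne_vs _ _ _ _).symm,
        (mid_ne_vs _ _ _ _).symm⟩
    -- connectivity of the two stars
    · refine connected_induce_star _ _ (vs (b 3)) (Set.mem_insert _ _) ?_
      intro x hx
      simp only [Set.mem_insert_iff, Set.mem_singleton_iff] at hx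
      rcases hx with rfl | rfl | rfl | rfl
      · exact Or.inl rfl
      · exact Or.inr (hXj _ _ _)
      · exact Or.inr (hXj _ _ _)
      · exact Or.inr (hXj _ _ _)
    · refine connected_induce_star _ _ (vs (b 4)) (Set.mem_insert _ _) ?_
      intro x hx
      simp only [Set.mem_insert_iff, Set.mem_singleton_iff] at hx
      rcases hx with rfl | rfl | rfl | rfl
      · exact Or.inl rfl
      · exact Or.inr (hXj _ _ _)
      · exact Or.inr (hXj _ _ _)
      · exact Or.inr (hXj _ _ _)
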